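/- With the Jordan-Schwinger boson realization J₊=b₁†b₂, J₋=b₂†b₁, J₀=N₁-N₂, the operator t_{1/2,1/2}=-(1-(h/2)J₊)^{-1}b₂ acts on the basis vector |jm⟩ of W^{(j)} by t_{1/2,1/2}|jm⟩ = -Σ_{n=0}^{j-m-1}(h/2)^n Λ_n^{jm} |j-1/2, m+1/2+n⟩, where Λ_n^{jm}=[(j-m)!(j+m+n)!/((j+m)!(j-m-n-1)!)]^{1/2}; in particular it maps W^{(j)} into W^{(j-1/2)}. -/

import Mathlib

open Finset

/-- Action of the lowering tensor operator `t_{1/2,1/2} = -(1-(h/2)J₊)⁻¹ b₂` on `|jm⟩`.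
The basis vector `|jm⟩` is encoded as `e p q` with `p = j+m`, `q = j-m`, so that
`b₁† e p q = √(p+1) e (p+1) q` and `b₂ e p q = √q e p (q-1)`; `J₊ = b₁† b₂`.  One has
`t_{1/2,1/2}|jm⟩ = -Σ_{n=0}^{j-m-1} (h/2)^n Λ_n^{jm} |j-1/2, m+1/2+n⟩` with
`Λ_n^{jm} = √((j-m)!(j+m+n)!/((j+m)!(j-m-n-1)!))`; in particular the image lies in
`W^{(j-1/2)}`, the span of the vectors `e p' q'` with `p' + q' + 1 = p + q`. -/
theorem boson_lowering_tensor_action {V : Type*} [AddCommGroup V] [Module ℂ V] (h : ℂ)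
    (b1d b2 : V →ₗ[ℂ] V) (e : ℕ → ℕ → V)
    (hb1d : ∀ p q, b1d (e p q) = (Real.sqrt (p + 1) : ℂ) • e (p + 1) q)
    (hb2 : ∀ p q, b2 (e p q) = (Real.sqrt q : ℂ) • e p (q - 1)) :
    ∀ p q : ℕ,
      (-∑ n ∈ range q, ((h / 2) ^ n) • ((b1d ∘ₗ b2) ^ n) (b2 (e p q))
        = -∑ n ∈ range q,
            ((h / 2) ^ n *
              (Real.sqrt ((q.factorial * (p + n).factorial : ℝ) /
                (p.factorial * (q - n - 1).factorial)) : ℂ)) • e (p + n) (q - 1 - n)) ∧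
      (-∑ n ∈ range q, ((h / 2) ^ n) • ((b1d ∘ₗ b2) ^ n) (b2 (e p q)))
        ∈ Submodule.span ℂ {v : V | ∃ p' q' : ℕ, p' + q' + 1 = p + q ∧ v = e p' q'} := by
  have key : ∀ p q n : ℕ, n < q →
      ((b1d ∘ₗ b2) ^ n) (b2 (e p q))
        = ((Real.sqrt ((q.factorial * (p + n).factorial : ℝ) /
            (p.factorial * (q - n - 1).factorial)) : ℂ)) • e (p + n) (q - 1 - n) := by
    intro p q n
    induction n with
    | zero =>
      intro hq
      obtain ⟨k, rfl⟩ : ∃ k, q = k + 1 := ⟨q - 1, by omega⟩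
      simp only [pow_zero, Module.End.one_apply, hb2, Nat.add_zero, Nat.sub_zero,
        Nat.add_sub_cancel]
      congr 2
      rw [show ((Nat.factorial (k+1) * Nat.factorial p : ℝ) /
          (Nat.factorial p * Nat.factorial k)) = ((k : ℝ) + 1) by
        rw [Nat.factorial_succ]; push_cast
        field_simp]
      push_cast; ring_nf
    | succ n ih =>
      intro hq
      have hn : n < q := by omega
      obtain ⟨k, rfl⟩ : ∃ k, q = n + 2 + k := ⟨q - n - 2, by omega⟩
      rw [pow_succ', Module.End.mul_apply, ih hn, map_smul, LinearMap.comp_apply, hb2,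
        map_smul, hb1d, smul_smul, smul_smul]
      have e1 : n + 2 + k - 1 - n = k + 1 := by omega
      have e2 : n + 2 + k - n - 1 = k + 1 := by omega
      have e3 : n + 2 + k - 1 - (n + 1) = k := by omega
      have e4 : n + 2 + k - (n + 1) - 1 = k := by omega
      rw [e1, e2, e3, e4]
      have e5 : k + 1 - 1 = k := by omega
      rw [e5]
      have e6 : p + n + 1 = p + (n + 1) := by omega
      rw [e6]
      congr 1
      rw [← Complex.ofReal_mul, ← Complex.ofReal_mul]
      rw [Complex.ofReal_inj]
      rw [← Real.sqrt_mul (by positivity), ← Real.sqrt_mul (by positivity)]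
      congr 1
      rw [← e6, Nat.factorial_succ (p + n), Nat.factorial_succ k]
      push_cast
      have hp : (Nat.factorial p : ℝ) ≠ 0 := by positivity
      have hk : (Nat.factorial k : ℝ) ≠ 0 := by positivity
      field_simp
  intro p q
  constructor
  · congr 1
    refine Finset.sum_congr rfl fun n hn => ?_
    rw [key p q n (mem_range.mp hn), smul_smul]
  · refine neg_mem (Submodule.sum_mem _ fun n hn => ?_)
    rw [key p q n (mem_range.mp hn)]
    exact Submodule.smul_mem _ _ (Submodule.smul_mem _ _ (Submodule.subset_span
      ⟨p + n, q - 1 - n, by have := mem_range.mp hn; omega, rfl⟩))
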